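/- Let n ≥ 2, R > 0, let f : [0,R] → [0,∞) be measurable with ∫₀^s f(ρ)ρ^{n−1} dρ ∈ (0,∞) for every s ∈ (0,R], and let g ∈ L¹(𝕊^{n−1}, σ) be nonnegative with ∫_{𝕊^{n−1}} g dσ > 0, where σ is the surface measure on the unit Euclidean sphere 𝕊^{n−1}. Define w(x) := f(|x|)·g(x/|x|) for x ∈ B_R(0)∖{0} (Euclidean balls) and μ := w·𝓛ⁿ restricted to B_R(0). Then for every vector v ∈ ℝⁿ: (i) if ⟨v, ∫_{𝕊^{n−1}} θ·g(θ) dσ(θ)⟩ = 0, then r^{−2} ⨍_{B_r(0)} ⟨v, x⟩ dμ(x) → 0 as r ↓ 0; (ii) if ⟨v, ∫_{𝕊^{n−1}} θ·g(θ) dσ(θ)⟩ ≠ 0, then limsup_{r ↓ 0} |r^{−2} ⨍_{B_r(0)} ⟨v, x⟩ dμ(x)| = +∞, so in particular r^{−2} ⨍_{B_r(0)} ⟨v, x⟩ dμ(x) does not converge as r ↓ 0. -/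

import Mathlib

open MeasureTheory Filter Metric Set
open scoped ENNReal Topology RealInnerProductSpace

noncomputable section

variable {n : ℕ}


lemma aux_mp (hn : 1 ≤ n) :
    MeasurePreserving (homeomorphUnitSphereProd (EuclideanSpace ℝ (Fin n)))
      ((volume : Measure (EuclideanSpace ℝ (Fin n))).comap (↑))
      ((volume : Measure (EuclideanSpace ℝ (Fin n))).toSphere.prod
        (Measure.volumeIoiPow (n - 1))) := by
  have hdim : Module.finrank ℝ (EuclideanSpace ℝ (Fin n)) = n := finrank_euclideanSpace_fin
  have := (volume : Measure (EuclideanSpace ℝ (Fin n))).measurePreserving_homeomorphUnitSphereProd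
  rwa [hdim] at this

lemma aux_transfer_integral (hn : 1 ≤ n)
    (q : EuclideanSpace ℝ (Fin n) → ℝ)
    (Q : sphere (0 : EuclideanSpace ℝ (Fin n)) 1 × Ioi (0:ℝ) → ℝ)
    (hq : ∀ (x : EuclideanSpace ℝ (Fin n)) (hx : x ≠ 0),
      q x = Q (homeomorphUnitSphereProd (EuclideanSpace ℝ (Fin n)) ⟨x, hx⟩)) :
    ∫ x, q x = ∫ p, Q p ∂(((volume : Measure (EuclideanSpace ℝ (Fin n))).toSphere).prod
      (Measure.volumeIoiPow (n - 1))) := by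
  haveI : Nontrivial (EuclideanSpace ℝ (Fin n)) :=
    Module.nontrivial_of_finrank_pos (R := ℝ) (by rw [finrank_euclideanSpace_fin]; omega)
  calc ∫ x, q x
      = ∫ x : ({0}ᶜ : Set (EuclideanSpace ℝ (Fin n))), q x ∂((volume : Measure (EuclideanSpace ℝ (Fin n))).comap Subtype.val) := by
        rw [integral_subtype_comap (measurableSet_singleton _).compl,
          restrict_compl_singleton]
    _ = ∫ x : ({0}ᶜ : Set (EuclideanSpace ℝ (Fin n))),
          Q (homeomorphUnitSphereProd _ x) ∂((volume : Measure (EuclideanSpace ℝ (Fin n))).comap Subtype.val) := by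
        refine integral_congr_ae (.of_forall fun x => ?_)
        exact hq x.1 x.2
    _ = _ := (aux_mp hn).integral_comp (Homeomorph.measurableEmbedding _) Q

lemma aux_transfer_lintegral (hn : 1 ≤ n)
    (q : EuclideanSpace ℝ (Fin n) → ℝ≥0∞)
    (Q : sphere (0 : EuclideanSpace ℝ (Fin n)) 1 × Ioi (0:ℝ) → ℝ≥0∞)
    (hq : ∀ (x : EuclideanSpace ℝ (Fin n)) (hx : x ≠ 0),
      q x = Q (homeomorphUnitSphereProd (EuclideanSpace ℝ (Fin n)) ⟨x, hx⟩)) :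
    ∫⁻ x, q x = ∫⁻ p, Q p ∂(((volume : Measure (EuclideanSpace ℝ (Fin n))).toSphere).prod
      (Measure.volumeIoiPow (n - 1))) := by
  haveI : Nontrivial (EuclideanSpace ℝ (Fin n)) :=
    Module.nontrivial_of_finrank_pos (R := ℝ) (by rw [finrank_euclideanSpace_fin]; omega)
  calc ∫⁻ x, q x
      = ∫⁻ x : ({0}ᶜ : Set (EuclideanSpace ℝ (Fin n))), q x ∂((volume : Measure (EuclideanSpace ℝ (Fin n))).comap Subtype.val) := by
        rw [lintegral_subtype_comap (measurableSet_singleton (0 : EuclideanSpace ℝ (Fin n))).compl,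
          restrict_compl_singleton]
    _ = ∫⁻ x : ({0}ᶜ : Set (EuclideanSpace ℝ (Fin n))),
          Q (homeomorphUnitSphereProd _ x) ∂((volume : Measure (EuclideanSpace ℝ (Fin n))).comap Subtype.val) := by
        refine lintegral_congr fun x => ?_
        exact hq x.1 x.2
    _ = _ := (aux_mp hn).lintegral_comp_emb (Homeomorph.measurableEmbedding _) Q

lemma aux_nu_integral (m : ℕ) (K : ℝ → ℝ) (r : ℝ) :
    ∫ ρ : Ioi (0:ℝ), (Iio r).indicator K ρ.1 ∂(Measure.volumeIoiPow m)
      = ∫ t in Ioc (0:ℝ) r, K t * t ^ m := by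
  simp only [Measure.volumeIoiPow, ENNReal.ofReal]
  rw [integral_withDensity_eq_integral_smul
      ((measurable_subtype_coe.pow_const _).real_toNNReal),
    integral_subtype_comap measurableSet_Ioi
      (fun a : ℝ => Real.toNNReal (a ^ m) • (Iio r).indicator K a)]
  have h1 : ∀ t ∈ Ioi (0:ℝ), Real.toNNReal (t ^ m) • (Iio r).indicator K t
      = (Iio r).indicator (fun t => t ^ m * K t) t := by
    intro t ht
    by_cases h : t ∈ Iio r
    · simp [Set.indicator_of_mem h, NNReal.smul_def,
        Real.coe_toNNReal _ (pow_nonneg (le_of_lt ht) m)]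
    · simp [Set.indicator_of_notMem h]
  rw [setIntegral_congr_fun measurableSet_Ioi h1, setIntegral_indicator measurableSet_Iio,
    Set.Ioi_inter_Iio, setIntegral_congr_set Ioo_ae_eq_Ioc,
    setIntegral_congr_fun measurableSet_Ioc (fun t _ => mul_comm _ _)]

lemma aux_nu_lintegral (m : ℕ) (K : ℝ → ℝ≥0∞) (hK : Measurable K) (r : ℝ) :
    ∫⁻ ρ : Ioi (0:ℝ), (Iio r).indicator K ρ.1 ∂(Measure.volumeIoiPow m)
      = ∫⁻ t in Ioc (0:ℝ) r, K t * ENNReal.ofReal (t ^ m) := by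
  simp only [Measure.volumeIoiPow]
  rw [lintegral_withDensity_eq_lintegral_mul _
      (by exact (measurable_subtype_coe.pow_const _).ennreal_ofReal)
      (by exact (hK.indicator measurableSet_Iio).comp measurable_subtype_coe)]
  simp only [Pi.mul_apply]
  rw [lintegral_subtype_comap measurableSet_Ioi
    (fun t => ENNReal.ofReal (t ^ m) * (Iio r).indicator K t)]
  have h1 : ∀ t ∈ Ioi (0:ℝ),
      ENNReal.ofReal (t ^ m) * (Iio r).indicator K t
        = (Iio r).indicator (fun t => ENNReal.ofReal (t ^ m) * K t) t := by
    intro t _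
    by_cases h : t ∈ Iio r
    · simp [Set.indicator_of_mem h]
    · simp [Set.indicator_of_notMem h]
  rw [setLIntegral_congr_fun measurableSet_Ioi h1,
    lintegral_indicator measurableSet_Iio _]
  rw [Measure.restrict_restrict measurableSet_Iio]
  have : Iio r ∩ Ioi (0:ℝ) = Ioo 0 r := Set.inter_comm _ _ ▸ Set.Ioi_inter_Iio
  rw [this, Measure.restrict_congr_set Ioo_ae_eq_Ioc]
  exact lintegral_congr (fun t => mul_comm _ _)

lemma aux_W_aemeas (hn : 1 ≤ n) (f : ℝ → ℝ) (hf : Measurable f)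
    (g : EuclideanSpace ℝ (Fin n) → ℝ)
    (hg : AEMeasurable (fun θ : sphere (0 : EuclideanSpace ℝ (Fin n)) 1 => g ↑θ)
      ((volume : Measure (EuclideanSpace ℝ (Fin n))).toSphere)) :
    AEMeasurable (fun x : EuclideanSpace ℝ (Fin n) => f ‖x‖ * g (‖x‖⁻¹ • x)) volume := by
  haveI : Nontrivial (EuclideanSpace ℝ (Fin n)) :=
    Module.nontrivial_of_finrank_pos (R := ℝ) (by rw [finrank_euclideanSpace_fin]; omega)
  set σ := (volume : Measure (EuclideanSpace ℝ (Fin n))).toSphere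
  set ν := Measure.volumeIoiPow (n - 1)
  have h1 : AEMeasurable (fun p : sphere (0:(EuclideanSpace ℝ (Fin n))) 1 × Ioi (0:ℝ) => f p.2.1 * g ↑p.1)
      (σ.prod ν) := by
    have hf' : Measurable fun p : sphere (0:(EuclideanSpace ℝ (Fin n))) 1 × Ioi (0:ℝ) => f p.2.1 :=
      hf.comp (measurable_subtype_coe.comp measurable_snd)
    have hg' : AEMeasurable (fun p : sphere (0:(EuclideanSpace ℝ (Fin n))) 1 × Ioi (0:ℝ) => g ↑p.1) (σ.prod ν) :=
      hg.comp_quasiMeasurePreserving (Measure.quasiMeasurePreserving_fst (μ := σ) (ν := ν))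
    exact hf'.aemeasurable.mul hg'
  have h2 : AEMeasurable
      ((fun p : sphere (0:(EuclideanSpace ℝ (Fin n))) 1 × Ioi (0:ℝ) => f p.2.1 * g ↑p.1) ∘
        (homeomorphUnitSphereProd (EuclideanSpace ℝ (Fin n)))) ((volume : Measure (EuclideanSpace ℝ (Fin n))).comap Subtype.val) :=
    h1.comp_quasiMeasurePreserving (aux_mp hn).quasiMeasurePreserving
  have h3 : AEMeasurable ((fun x : (EuclideanSpace ℝ (Fin n)) => f ‖x‖ * g (‖x‖⁻¹ • x)) ∘
      (Subtype.val : ({0}ᶜ : Set (EuclideanSpace ℝ (Fin n))) → (EuclideanSpace ℝ (Fin n)))) ((volume : Measure (EuclideanSpace ℝ (Fin n))).comap Subtype.val) := by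
    refine h2.congr (Filter.Eventually.of_forall fun x => ?_)
    simp [Function.comp, homeomorphUnitSphereProd]
  rw [← restrict_compl_singleton (0 : EuclideanSpace ℝ (Fin n))
    (μ := (volume : Measure (EuclideanSpace ℝ (Fin n))))]
  exact (aemeasurable_restrict_iff_comap_subtype
    (measurableSet_singleton (0 : EuclideanSpace ℝ (Fin n))).compl).mpr h3

lemma aux_exp_le {x : ℝ} (h0 : 0 ≤ x) (h2 : x ≤ 1/2) : Real.exp (-(2*x)) ≤ 1 - x := by
  have h1 : 1 + 2*x ≤ Real.exp (2*x) := by have := Real.add_one_le_exp (2*x); linarith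
  have hpos : (0:ℝ) < 1 + 2*x := by linarith
  rw [Real.exp_neg]
  have h3 : (Real.exp (2*x))⁻¹ ≤ (1 + 2*x)⁻¹ := by
    apply inv_anti₀ hpos h1
  refine h3.trans ?_
  rw [inv_eq_one_div, div_le_iff₀ hpos]
  nlinarith

lemma aux_key (R : ℝ) (hR : 0 < R) (h : ℝ → ℝ) (hmeas : Measurable h)
    (hnn : ∀ t, t ∈ Ioc (0:ℝ) R → 0 ≤ h t)
    (hI : IntegrableOn h (Ioc (0:ℝ) R) volume)
    (hFpos : ∀ s, 0 < s → s ≤ R → 0 < ∫ t in Ioc (0:ℝ) s, h t)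
    (C ε : ℝ) (hC : 0 < C) (hε : 0 < ε) :
    ∃ r, 0 < r ∧ r < ε ∧ r ≤ R ∧
      C * r^2 * (∫ t in Ioc (0:ℝ) r, h t) < ∫ t in Ioc (0:ℝ) r, h t * t := by
  by_contra hcon
  push_neg at hcon
  set F : ℝ → ℝ := fun s => ∫ t in Ioc (0:ℝ) s, h t with hF
  have hIr : ∀ r, r ≤ R → IntegrableOn h (Ioc (0:ℝ) r) volume := fun r hr =>
    hI.mono_set (Ioc_subset_Ioc_right hr)
  have hIt : IntegrableOn (fun t => h t * t) (Ioc (0:ℝ) R) volume := by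
    refine Integrable.mono' (hI.const_mul R) ((hmeas.mul measurable_id).aestronglyMeasurable) ?_
    filter_upwards [ae_restrict_mem measurableSet_Ioc] with t ht
    have h1 : 0 ≤ h t := hnn t ht
    rw [Real.norm_eq_abs, abs_mul, abs_of_nonneg h1, abs_of_pos ht.1]
    nlinarith [ht.2, ht.1]
  -- choice of r₀
  obtain ⟨r₀, hr₀pos, hr₀ε, hr₀R, hr₀C⟩ : ∃ r₀, 0 < r₀ ∧ r₀ < ε ∧ r₀ ≤ R ∧ C * r₀ ≤ 1/4 := by
    refine ⟨min (min (ε/2) R) (1/(4*C)), ?_, ?_, ?_, ?_⟩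
    · have : 0 < 1/(4*C) := by positivity
      positivity
    · calc min (min (ε/2) R) (1/(4*C)) ≤ min (ε/2) R := min_le_left _ _
        _ ≤ ε/2 := min_le_left _ _
        _ < ε := by linarith
    · exact le_trans (min_le_left _ _) (min_le_right _ _)
    · have h1 : min (min (ε/2) R) (1/(4*C)) ≤ 1/(4*C) := min_le_right _ _
      calc C * min (min (ε/2) R) (1/(4*C)) ≤ C * (1/(4*C)) :=
            mul_le_mul_of_nonneg_left h1 hC.le
        _ = 1/4 := by field_simp
  -- the main step
  have hstep : ∀ r, 0 < r → r ≤ r₀ → Real.exp (-(4*(C*r))) * F r ≤ F (r/2) := by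
    intro r hrpos hrr₀
    have hrR : r ≤ R := hrr₀.trans hr₀R
    have hrε : r < ε := lt_of_le_of_lt hrr₀ hr₀ε
    have h2 : ∫ t in Ioc (0:ℝ) r, h t * t ≤ C * r^2 * F r := hcon r hrpos hrε hrR
    have hsplit : F r = F (r/2) + ∫ t in Ioc (r/2) r, h t := by
      rw [hF]
      simp only []
      rw [← setIntegral_union (Set.Ioc_disjoint_Ioc_of_le le_rfl) measurableSet_Ioc
        (hIr (r/2) (by linarith)) (hI.mono_set ?_),
        Set.Ioc_union_Ioc_eq_Ioc (by linarith) (by linarith)]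
      intro t ht
      exact ⟨lt_trans (by linarith) ht.1, ht.2.trans hrR⟩
    have hmid_nonneg : ∀ t ∈ Ioc (r/2) r, 0 ≤ h t := fun t ht =>
      hnn t ⟨lt_trans (by linarith) ht.1, ht.2.trans hrR⟩
    have hImid : IntegrableOn (fun t => h t * t) (Ioc (r/2) r) volume :=
      hIt.mono_set (fun t ht => ⟨lt_trans (by linarith) ht.1, ht.2.trans hrR⟩)
    have hImid' : IntegrableOn h (Ioc (r/2) r) volume :=
      hI.mono_set (fun t ht => ⟨lt_trans (by linarith) ht.1, ht.2.trans hrR⟩)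
    have hlow : (r/2) * (F r - F (r/2)) ≤ ∫ t in Ioc (0:ℝ) r, h t * t := by
      have e1 : ∫ t in Ioc (r/2) r, h t * t ≤ ∫ t in Ioc (0:ℝ) r, h t * t := by
        refine setIntegral_mono_set
          (hIt.mono_set (Ioc_subset_Ioc_right hrR)) ?_
          (HasSubset.Subset.eventuallyLE (fun t ht =>
            ⟨lt_trans (by linarith) ht.1, ht.2⟩))
        filter_upwards [ae_restrict_mem measurableSet_Ioc] with t ht
        have := hnn t ⟨ht.1, ht.2.trans hrR⟩
        simp only [Pi.zero_apply]
        nlinarith [ht.1]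
      have e2 : ∫ t in Ioc (r/2) r, (r/2) * h t ≤ ∫ t in Ioc (r/2) r, h t * t := by
        refine setIntegral_mono_on (hImid'.const_mul _) hImid measurableSet_Ioc ?_
        intro t ht
        have h1 : 0 ≤ h t := hmid_nonneg t ht
        nlinarith [ht.1]
      have e3 : ∫ t in Ioc (r/2) r, (r/2) * h t = (r/2) * (F r - F (r/2)) := by
        rw [integral_const_mul]
        congr 1
        rw [hsplit]; ring
      linarith
    -- conclude step
    have hFr_pos : 0 < F r := hFpos r hrpos hrR
    have h5 : F r - F (r/2) ≤ 2*C*r*(F r) := by nlinarith [hlow, h2, hrpos]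
    have hx0 : 0 ≤ 2*(C*r) := by positivity
    have hx2 : 2*(C*r) ≤ 1/2 := by nlinarith [mul_le_mul_of_nonneg_left hrr₀ hC.le]
    have hexp : Real.exp (-(2*(2*(C*r)))) ≤ 1 - 2*(C*r) := aux_exp_le hx0 hx2
    have : Real.exp (-(4*(C*r))) * F r ≤ (1 - 2*(C*r)) * F r := by
      have : Real.exp (-(4*(C*r))) ≤ 1 - 2*(C*r) := by
        have h6 : -(2*(2*(C*r))) = -(4*(C*r)) := by ring
        rwa [h6] at hexp
      exact mul_le_mul_of_nonneg_right this hFr_pos.le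
    nlinarith [this]
  -- induction
  have hind : ∀ k : ℕ, Real.exp (-(8*(C*r₀)) * (1 - (1/2)^k)) * F r₀ ≤ F (r₀ / 2^k) := by
    intro k
    induction k with
    | zero => simp
    | succ k ih =>
      have hrk : 0 < r₀ / 2^k := by positivity
      have hrk' : r₀ / 2^k ≤ r₀ :=
        div_le_self hr₀pos.le (one_le_pow₀ (by norm_num))
      have hs := hstep (r₀/2^k) hrk hrk'
      have hdiv : r₀ / 2^(k+1) = (r₀ / 2^k)/2 := by
        rw [pow_succ]; ring
      rw [hdiv]
      calc Real.exp (-(8*(C*r₀)) * (1 - (1/2)^(k+1))) * F r₀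
          = Real.exp (-(4*(C*(r₀/2^k)))) *
              (Real.exp (-(8*(C*r₀)) * (1 - (1/2)^k)) * F r₀) := by
            have hEq : Real.exp (-(4*(C*(r₀/2^k)))) *
                Real.exp (-(8*(C*r₀)) * (1 - (1/2)^k))
                = Real.exp (-(8*(C*r₀)) * (1 - (1/2)^(k+1))) := by
              rw [← Real.exp_add]
              congr 1
              have h2k : (1/2:ℝ)^k * 2^k = 1 := by rw [← mul_pow]; norm_num
              field_simp
              linear_combination 4 * h2k
            rw [← hEq, mul_assoc]
        _ ≤ Real.exp (-(4*(C*(r₀/2^k)))) * F (r₀ / 2^k) :=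
            mul_le_mul_of_nonneg_left ih (Real.exp_nonneg _)
        _ ≤ F (r₀ / 2^k / 2) := hs
  have hFr₀_pos : 0 < F r₀ := hFpos r₀ hr₀pos hr₀R
  have hub : ∀ k : ℕ, Real.exp (-(8*(C*r₀))) * F r₀ ≤ F (r₀ / 2^k) := by
    intro k
    refine le_trans (mul_le_mul_of_nonneg_right (Real.exp_le_exp.2 ?_) hFr₀_pos.le) (hind k)
    have hp : (0:ℝ) ≤ (1/2)^k := by positivity
    nlinarith [mul_pos hC hr₀pos]
  -- tendsto 0
  have hseq : Tendsto (fun k : ℕ => r₀ / 2^k) atTop (𝓝 0) := by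
    have h1 : Tendsto (fun k : ℕ => ((1:ℝ)/2)^k) atTop (𝓝 0) :=
      tendsto_pow_atTop_nhds_zero_of_lt_one (by norm_num) (by norm_num)
    have h2 := h1.const_mul r₀
    rw [mul_zero] at h2
    refine h2.congr fun k => ?_
    rw [div_pow, one_pow]
    ring
  have hFT : Tendsto (fun k : ℕ => F (r₀ / 2^k)) atTop (𝓝 0) := by
    have hrw : ∀ k : ℕ, F (r₀ / 2^k) = ∫ t in Ioc (0:ℝ) R,
        (Ioc (0:ℝ) (r₀ / 2^k)).indicator h t := by
      intro k
      rw [setIntegral_indicator measurableSet_Ioc,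
        Set.inter_eq_right.2 (Ioc_subset_Ioc_right ((div_le_self hr₀pos.le
          (one_le_pow₀ (by norm_num))).trans hr₀R))]
    have h0 : (0:ℝ) = ∫ t in Ioc (0:ℝ) R, (0:ℝ) := by simp
    simp only [hrw]
    rw [show (𝓝 (0:ℝ)) = 𝓝 (∫ t in Ioc (0:ℝ) R, (0:ℝ)) by rw [← h0]]
    refine tendsto_integral_of_dominated_convergence h
      (fun k => (hmeas.indicator measurableSet_Ioc).aestronglyMeasurable)
      hI ?_ ?_
    · intro k
      filter_upwards [ae_restrict_mem measurableSet_Ioc] with t ht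
      by_cases hmem : t ∈ Ioc (0:ℝ) (r₀ / 2^k)
      · rw [Set.indicator_of_mem hmem, Real.norm_eq_abs, abs_of_nonneg (hnn t ht)]
      · rw [Set.indicator_of_notMem hmem]
        simpa using hnn t ht
    · filter_upwards [ae_restrict_mem measurableSet_Ioc] with t ht
      have hev : ∀ᶠ k in atTop, (Ioc (0:ℝ) (r₀ / 2^k)).indicator h t = 0 := by
        filter_upwards [hseq.eventually (Iio_mem_nhds ht.1)] with k hk
        exact Set.indicator_of_notMem (fun hmem => absurd hmem.2 (not_le.2 hk)) _
      exact Tendsto.congr' (hev.mono fun k hk => hk.symm) tendsto_const_nhds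
  have hle := ge_of_tendsto hFT (Filter.Eventually.of_forall hub)
  nlinarith [Real.exp_pos (-(8*(C*r₀))), hle, hFr₀_pos]

end

/-- Let `n ≥ 2`, `R > 0`, `f : [0,R] → [0,∞)` measurable with
`∫₀^s f(ρ)ρ^{n−1} dρ ∈ (0,∞)` for `s ∈ (0,R]`, and `g ∈ L¹(𝕊^{n−1},σ)` nonnegative with
`∫ g dσ > 0`, where `σ` is the surface measure on the unit sphere.  For the separable weight
`w(x) = f(|x|) g(x/|x|)` and `μ = w 𝓛ⁿ ⌞ B_R(0)`, for every `v ∈ ℝⁿ`: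
(i) if `⟨v, ∫ θ g(θ) dσ⟩ = 0` then `r⁻² ⨍_{B_r(0)} ⟨v,x⟩ dμ → 0` as `r ↓ 0`;
(ii) if `⟨v, ∫ θ g(θ) dσ⟩ ≠ 0` then `limsup_{r↓0} |r⁻² ⨍_{B_r(0)} ⟨v,x⟩ dμ| = +∞`, and in
particular the quantity does not converge as `r ↓ 0`. -/
theorem stmt_19 {n : ℕ} (hn : 2 ≤ n) (R : ℝ) (hR : 0 < R)
    (f : ℝ → ℝ) (hf_meas : Measurable f) (hf_nonneg : ∀ ρ, 0 ≤ f ρ)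
    (hf_int : ∀ s : ℝ, 0 < s → s ≤ R →
      IntegrableOn (fun ρ => f ρ * ρ ^ (n - 1)) (Ioc 0 s) volume ∧
      0 < ∫ ρ in Ioc (0 : ℝ) s, f ρ * ρ ^ (n - 1))
    (g : EuclideanSpace ℝ (Fin n) → ℝ)
    (hg_nonneg : ∀ θ ∈ sphere (0 : EuclideanSpace ℝ (Fin n)) 1, 0 ≤ g θ)
    (hg_int : Integrable (fun θ : sphere (0 : EuclideanSpace ℝ (Fin n)) 1 => g ↑θ)
      ((volume : Measure (EuclideanSpace ℝ (Fin n))).toSphere))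
    (hg_pos : 0 < ∫ θ : sphere (0 : EuclideanSpace ℝ (Fin n)) 1, g ↑θ
      ∂((volume : Measure (EuclideanSpace ℝ (Fin n))).toSphere))
    (w : EuclideanSpace ℝ (Fin n) → ℝ)
    (hw : ∀ x : EuclideanSpace ℝ (Fin n), x ≠ 0 → w x = f ‖x‖ * g (‖x‖⁻¹ • x))
    (μ : Measure (EuclideanSpace ℝ (Fin n)))
    (hμdef : μ = (volume.restrict (ball (0 : EuclideanSpace ℝ (Fin n)) R)).withDensity
      fun x => ENNReal.ofReal (w x))
    (v : EuclideanSpace ℝ (Fin n)) :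
    (⟪v, ∫ θ : sphere (0 : EuclideanSpace ℝ (Fin n)) 1, g ↑θ • (↑θ : EuclideanSpace ℝ (Fin n))
        ∂((volume : Measure (EuclideanSpace ℝ (Fin n))).toSphere)⟫ = 0 →
      Tendsto (fun r : ℝ => (1 / r ^ 2) *
          ⨍ x in ball (0 : EuclideanSpace ℝ (Fin n)) r, ⟪v, x⟫ ∂μ)
        (𝓝[>] (0 : ℝ)) (𝓝 0)) ∧
    (⟪v, ∫ θ : sphere (0 : EuclideanSpace ℝ (Fin n)) 1, g ↑θ • (↑θ : EuclideanSpace ℝ (Fin n))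
        ∂((volume : Measure (EuclideanSpace ℝ (Fin n))).toSphere)⟫ ≠ 0 →
      (∀ M : ℝ, ∃ᶠ r in 𝓝[>] (0 : ℝ), M < |(1 / r ^ 2) *
          ⨍ x in ball (0 : EuclideanSpace ℝ (Fin n)) r, ⟪v, x⟫ ∂μ|) ∧
      ¬ ∃ L : ℝ, Tendsto (fun r : ℝ => (1 / r ^ 2) *
          ⨍ x in ball (0 : EuclideanSpace ℝ (Fin n)) r, ⟪v, x⟫ ∂μ)
        (𝓝[>] (0 : ℝ)) (𝓝 L)) := by
  classical
  have hn1 : 1 ≤ n := by omega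
  haveI : Nontrivial (EuclideanSpace ℝ (Fin n)) :=
    Module.nontrivial_of_finrank_pos (R := ℝ) (by rw [finrank_euclideanSpace_fin]; omega)
  set σ := (volume : Measure (EuclideanSpace ℝ (Fin n))).toSphere with hσdef
  set G := ∫ θ : sphere (0 : EuclideanSpace ℝ (Fin n)) 1, g ↑θ ∂σ with hGdef
  set I := ∫ θ : sphere (0 : EuclideanSpace ℝ (Fin n)) 1,
      g ↑θ * ⟪v, (θ : EuclideanSpace ℝ (Fin n))⟫ ∂σ with hIdef
  set Fp : ℝ → ℝ := fun s => ∫ t in Ioc (0:ℝ) s, f t * t^(n-1) with hFpdef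
  set F2 : ℝ → ℝ := fun s => ∫ t in Ioc (0:ℝ) s, (f t * t^(n-1)) * t with hF2def
  set W : EuclideanSpace ℝ (Fin n) → ℝ := fun x => f ‖x‖ * g (‖x‖⁻¹ • x) with hWdef
  have hsph : ∀ x : EuclideanSpace ℝ (Fin n), x ≠ 0 →
      (‖x‖⁻¹ • x) ∈ sphere (0 : EuclideanSpace ℝ (Fin n)) 1 := by
    intro x hx
    rw [mem_sphere_zero_iff_norm, norm_smul, norm_inv, norm_norm,
      inv_mul_cancel₀ (norm_ne_zero_iff.2 hx)]
  -- the vector integral and I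
  have hvec_int : Integrable (fun θ : sphere (0 : EuclideanSpace ℝ (Fin n)) 1 =>
      g ↑θ • (θ : EuclideanSpace ℝ (Fin n))) σ := by
    refine Integrable.mono' hg_int.abs
      (hg_int.1.smul continuous_subtype_val.aestronglyMeasurable) ?_
    refine Filter.Eventually.of_forall fun θ => ?_
    rw [norm_smul, mem_sphere_zero_iff_norm.1 θ.2, mul_one]
    exact le_of_eq (Real.norm_eq_abs _)
  have hIinner : I = ⟪v, ∫ θ : sphere (0 : EuclideanSpace ℝ (Fin n)) 1,
      g ↑θ • (↑θ : EuclideanSpace ℝ (Fin n)) ∂σ⟫ := by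
    rw [← integral_inner hvec_int v]
    refine integral_congr_ae (Filter.Eventually.of_forall fun θ => ?_)
    show g ↑θ * ⟪v, (θ : EuclideanSpace ℝ (Fin n))⟫
      = ⟪v, g ↑θ • (θ : EuclideanSpace ℝ (Fin n))⟫
    exact (real_inner_smul_right v _ (g ↑θ)).symm
  -- restriction manipulation
  have hrestrict : ∀ r : ℝ, r ≤ R → μ.restrict (ball (0 : EuclideanSpace ℝ (Fin n)) r)
      = ((volume : Measure (EuclideanSpace ℝ (Fin n))).restrict
          (ball (0 : EuclideanSpace ℝ (Fin n)) r)).withDensity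
          (fun x => ENNReal.ofReal (W x)) := by
    intro r hrR
    rw [hμdef, restrict_withDensity measurableSet_ball,
      Measure.restrict_restrict measurableSet_ball,
      inter_eq_left.2 (ball_subset_ball hrR)]
    refine withDensity_congr_ae ?_
    have h0 : ∀ᵐ x ∂((volume : Measure (EuclideanSpace ℝ (Fin n))).restrict
        (ball (0 : EuclideanSpace ℝ (Fin n)) r)), x ≠ 0 := by
      refine ae_restrict_of_ae ?_
      filter_upwards [(countable_singleton
        (0 : EuclideanSpace ℝ (Fin n))).ae_notMem volume] with x hx
      simpa using hx
    filter_upwards [h0] with x hx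
    rw [hw x hx]
  -- mass formula
  have hmass : ∀ r : ℝ, 0 < r → r ≤ R →
      μ (ball (0 : EuclideanSpace ℝ (Fin n)) r)
        = ENNReal.ofReal G * ENNReal.ofReal (Fp r) := by
    intro r hr hrR
    have h1 : μ (ball (0 : EuclideanSpace ℝ (Fin n)) r)
        = ∫⁻ x, (ball (0 : EuclideanSpace ℝ (Fin n)) r).indicator
            (fun x => ENNReal.ofReal (W x)) x ∂(volume : Measure (EuclideanSpace ℝ (Fin n))) := by
      rw [← Measure.restrict_apply_univ, hrestrict r hrR,
        withDensity_apply _ MeasurableSet.univ, Measure.restrict_restrict MeasurableSet.univ,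
        Set.univ_inter, lintegral_indicator measurableSet_ball]
    rw [h1, aux_transfer_lintegral hn1 _
      (fun p => ENNReal.ofReal (g ↑p.1) *
        (Iio r).indicator (fun t => ENNReal.ofReal (f t)) p.2.1) ?_]
    · have hsplit : (∫⁻ p : (sphere (0 : EuclideanSpace ℝ (Fin n)) 1) × Ioi (0:ℝ),
            ENNReal.ofReal (g ↑p.1) *
              (Iio r).indicator (fun t => ENNReal.ofReal (f t)) p.2.1
            ∂(σ.prod (Measure.volumeIoiPow (n-1))))
          = (∫⁻ θ : sphere (0 : EuclideanSpace ℝ (Fin n)) 1, ENNReal.ofReal (g ↑θ) ∂σ) *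
            (∫⁻ ρ : Ioi (0:ℝ), (Iio r).indicator (fun t => ENNReal.ofReal (f t)) ρ.1
              ∂(Measure.volumeIoiPow (n-1))) :=
        lintegral_prod_mul (hg_int.1.aemeasurable.ennreal_ofReal)
          ((((hf_meas.ennreal_ofReal.indicator measurableSet_Iio).comp
            measurable_subtype_coe).aemeasurable :
              AEMeasurable (fun ρ : Ioi (0:ℝ) =>
                (Iio r).indicator (fun t => ENNReal.ofReal (f t)) ρ.1)
                (Measure.volumeIoiPow (n-1))))
      rw [hsplit, aux_nu_lintegral (n-1) _ hf_meas.ennreal_ofReal r]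
      have hA : ∫⁻ θ : sphere (0 : EuclideanSpace ℝ (Fin n)) 1,
          ENNReal.ofReal (g ↑θ) ∂σ = ENNReal.ofReal G :=
        (ofReal_integral_eq_lintegral_ofReal hg_int
          (Filter.Eventually.of_forall fun θ => hg_nonneg ↑θ θ.2)).symm
      have hB : ∫⁻ t in Ioc (0:ℝ) r, ENNReal.ofReal (f t) * ENNReal.ofReal (t^(n-1))
          = ENNReal.ofReal (Fp r) := by
        have e1 : ∫⁻ t in Ioc (0:ℝ) r, ENNReal.ofReal (f t) * ENNReal.ofReal (t^(n-1))
            = ∫⁻ t in Ioc (0:ℝ) r, ENNReal.ofReal (f t * t^(n-1)) :=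
          setLIntegral_congr_fun measurableSet_Ioc
            (fun t ht =>
              (ENNReal.ofReal_mul (hf_nonneg t)).symm)
        have e2 : 0 ≤ᵐ[(volume : Measure ℝ).restrict (Ioc (0:ℝ) r)]
            fun t => f t * t^(n-1) := by
          filter_upwards [ae_restrict_mem measurableSet_Ioc] with t ht
          exact mul_nonneg (hf_nonneg t) (pow_nonneg ht.1.le _)
        rw [e1, ← ofReal_integral_eq_lintegral_ofReal (hf_int r hr hrR).1 e2]
      rw [hA, hB]
    · intro x hx
      simp only [homeomorphUnitSphereProd_apply_fst_coe,
        homeomorphUnitSphereProd_apply_snd_coe]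
      by_cases hmem : x ∈ ball (0 : EuclideanSpace ℝ (Fin n)) r
      · rw [Set.indicator_of_mem hmem, Set.indicator_of_mem
          (by exact mem_ball_zero_iff.1 hmem : ‖x‖ ∈ Iio r)]
        simp only [hWdef]
        rw [mul_comm (f ‖x‖), ENNReal.ofReal_mul (hg_nonneg _ (hsph x hx))]
      · rw [Set.indicator_of_notMem hmem]
        rw [Set.indicator_of_notMem (show ‖x‖ ∉ Iio r from
          fun hc => hmem (mem_ball_zero_iff.2 hc)), mul_zero]
  -- AEMeasurability of the weight
  have hWaemeas : AEMeasurable W (volume : Measure (EuclideanSpace ℝ (Fin n))) :=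
    aux_W_aemeas hn1 f hf_meas g hg_int.1.aemeasurable
  -- inner integral formula
  have hinner : ∀ r : ℝ, 0 < r → r ≤ R →
      (∫ x in ball (0 : EuclideanSpace ℝ (Fin n)) r, ⟪v, x⟫ ∂μ) = I * F2 r := by
    intro r hr hrR
    have h1 : (∫ x in ball (0 : EuclideanSpace ℝ (Fin n)) r, ⟪v, x⟫ ∂μ)
        = ∫ x, ⟪v, x⟫ ∂(((volume : Measure (EuclideanSpace ℝ (Fin n))).restrict
            (ball (0 : EuclideanSpace ℝ (Fin n)) r)).withDensity
            (fun x => ENNReal.ofReal (W x))) := by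
      rw [← hrestrict r hrR]
    rw [h1]
    simp only [ENNReal.ofReal]
    rw [integral_withDensity_eq_integral_smul₀
      (hWaemeas.restrict.real_toNNReal) (fun x => ⟪v, x⟫)]
    rw [← integral_indicator measurableSet_ball]
    rw [aux_transfer_integral hn1 _
      (fun p => (g ↑p.1 * ⟪v, (p.1 : EuclideanSpace ℝ (Fin n))⟫) *
        ((Iio r).indicator (fun t => f t * t) p.2.1)) ?_]
    · have hsplit : (∫ p : (sphere (0 : EuclideanSpace ℝ (Fin n)) 1) × Ioi (0:ℝ),
          (g ↑p.1 * ⟪v, (p.1 : EuclideanSpace ℝ (Fin n))⟫) *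
            ((Iio r).indicator (fun t => f t * t) p.2.1)
          ∂(σ.prod (Measure.volumeIoiPow (n-1))))
          = (∫ θ : sphere (0 : EuclideanSpace ℝ (Fin n)) 1,
              g ↑θ * ⟪v, (θ : EuclideanSpace ℝ (Fin n))⟫ ∂σ) *
            (∫ ρ : Ioi (0:ℝ), (Iio r).indicator (fun t => f t * t) ρ.1
              ∂(Measure.volumeIoiPow (n-1))) :=
        integral_prod_mul
          (fun θ : sphere (0 : EuclideanSpace ℝ (Fin n)) 1 =>
            g ↑θ * ⟪v, (θ : EuclideanSpace ℝ (Fin n))⟫)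
          (fun ρ : Ioi (0:ℝ) => (Iio r).indicator (fun t => f t * t) ρ.1)
      rw [hsplit, aux_nu_integral (n-1) (fun t => f t * t) r, ← hIdef]
      congr 1
      rw [hF2def]
      exact setIntegral_congr_fun measurableSet_Ioc fun t _ => by ring
    · intro x hx
      simp only [homeomorphUnitSphereProd_apply_fst_coe,
        homeomorphUnitSphereProd_apply_snd_coe]
      by_cases hmem : x ∈ ball (0 : EuclideanSpace ℝ (Fin n)) r
      · rw [Set.indicator_of_mem hmem, Set.indicator_of_mem
          (show ‖x‖ ∈ Iio r from mem_ball_zero_iff.1 hmem)]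
        have hnn0 : 0 ≤ W x := mul_nonneg (hf_nonneg _) (hg_nonneg _ (hsph x hx))
        have hcoe : ((W x).toNNReal : ℝ) = W x := Real.coe_toNNReal _ hnn0
        rw [NNReal.smul_def, hcoe]
        have hip : ⟪v, (‖x‖⁻¹ • x : EuclideanSpace ℝ (Fin n))⟫ = ‖x‖⁻¹ * ⟪v, x⟫ :=
          real_inner_smul_right v x ‖x‖⁻¹
        simp only [hWdef]
        rw [hip]
        have hxn : ‖x‖ ≠ 0 := norm_ne_zero_iff.2 hx
        field_simp
        ring
      · rw [Set.indicator_of_notMem hmem]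
        rw [Set.indicator_of_notMem (show ‖x‖ ∉ Iio r from
          fun hc => hmem (mem_ball_zero_iff.2 hc)), mul_zero]
  -- positivity facts
  have hGpos : 0 < G := hg_pos
  have hFppos : ∀ r : ℝ, 0 < r → r ≤ R → 0 < Fp r := fun r h1 h2 => (hf_int r h1 h2).2
  -- average formula
  have hQ : ∀ r : ℝ, 0 < r → r ≤ R →
      (1 / r ^ 2) * ⨍ x in ball (0 : EuclideanSpace ℝ (Fin n)) r, ⟪v, x⟫ ∂μ
        = (1 / r ^ 2) * ((G * Fp r)⁻¹ * (I * F2 r)) := by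
    intro r hr hrR
    rw [setAverage_eq, measureReal_def, hmass r hr hrR, hinner r hr hrR, smul_eq_mul,
      ENNReal.toReal_mul, ENNReal.toReal_ofReal hGpos.le,
      ENNReal.toReal_ofReal (hFppos r hr hrR).le]
  -- finale
  constructor
  · intro hI0
    have hI0' : I = 0 := by rw [hIinner]; exact hI0
    have hev : ∀ᶠ r in 𝓝[>] (0:ℝ), (1 / r ^ 2) *
        ⨍ x in ball (0 : EuclideanSpace ℝ (Fin n)) r, ⟪v, x⟫ ∂μ = 0 := by
      filter_upwards [Ioc_mem_nhdsGT hR] with r hr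
      rw [hQ r hr.1 hr.2, hI0']
      ring
    exact Tendsto.congr' (hev.mono fun r h => h.symm) tendsto_const_nhds
  · intro hI0
    have hIne : I ≠ 0 := by rw [hIinner]; exact hI0
    have habsI : 0 < |I| := abs_pos.2 hIne
    have hfreq : ∀ M : ℝ, ∃ᶠ r in 𝓝[>] (0:ℝ), M < |(1 / r ^ 2) *
        ⨍ x in ball (0 : EuclideanSpace ℝ (Fin n)) r, ⟪v, x⟫ ∂μ| := by
      intro M
      rw [Filter.frequently_iff]
      intro U hU
      obtain ⟨ε, hε, hsub⟩ := mem_nhdsGT_iff_exists_Ioo_subset.1 hU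
      have hεpos : 0 < ε := hε
      set M' : ℝ := max M 0 + 1 with hM'def
      have hmax0 : (0:ℝ) ≤ max M 0 := le_max_right _ _
      have hM'pos : 0 < M' := by rw [hM'def]; linarith
      set C : ℝ := M' * G / |I| with hCdef
      have hCpos : 0 < C := div_pos (mul_pos hM'pos hGpos) habsI
      obtain ⟨r, hr0, hrε, hrR, hkey⟩ := aux_key R hR (fun t => f t * t^(n-1))
        (hf_meas.mul (measurable_id.pow_const _))
        (fun t ht => mul_nonneg (hf_nonneg t) (pow_nonneg ht.1.le _))
        (hf_int R hR le_rfl).1 (fun s h1 h2 => (hf_int s h1 h2).2) C ε hCpos hεpos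
      refine ⟨r, hsub ⟨hr0, hrε⟩, ?_⟩
      rw [hQ r hr0 hrR]
      have hFp := hFppos r hr0 hrR
      have hF2pos : 0 < F2 r := lt_trans (by positivity) hkey
      have habs : |(1 / r ^ 2) * ((G * Fp r)⁻¹ * (I * F2 r))|
          = (1 / r ^ 2) * ((G * Fp r)⁻¹ * (|I| * F2 r)) := by
        rw [abs_mul, abs_mul, abs_mul, abs_of_pos (by positivity : (0:ℝ) < 1/r^2),
          abs_of_pos (by positivity : (0:ℝ) < (G * Fp r)⁻¹), abs_of_pos hF2pos]
      rw [habs]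
      have hlt : (1 / r ^ 2) * ((G * Fp r)⁻¹ * (|I| * (C * r^2 * Fp r)))
          < (1 / r ^ 2) * ((G * Fp r)⁻¹ * (|I| * F2 r)) := by
        apply mul_lt_mul_of_pos_left _ (by positivity : (0:ℝ) < 1/r^2)
        apply mul_lt_mul_of_pos_left _ (by positivity : (0:ℝ) < (G * Fp r)⁻¹)
        exact mul_lt_mul_of_pos_left hkey habsI
      have heq : (1 / r ^ 2) * ((G * Fp r)⁻¹ * (|I| * (C * r^2 * Fp r))) = M' := by
        rw [hCdef]
        have hIne' : |I| ≠ 0 := ne_of_gt habsI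
        have hGne : G ≠ 0 := ne_of_gt hGpos
        have hFpne : Fp r ≠ 0 := ne_of_gt hFp
        have hrne : r ≠ 0 := ne_of_gt hr0
        field_simp
      have hMM' : M < M' := by
        have : M ≤ max M 0 := le_max_left _ _
        rw [hM'def]; linarith
      linarith [hlt, heq]
    refine ⟨hfreq, ?_⟩
    rintro ⟨L, hL⟩
    have h2 : ∀ᶠ r in 𝓝[>] (0:ℝ), |(1 / r ^ 2) *
        ⨍ x in ball (0 : EuclideanSpace ℝ (Fin n)) r, ⟪v, x⟫ ∂μ| < |L| + 1 :=
      hL.abs.eventually_lt_const (by linarith [abs_nonneg L])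
    obtain ⟨r, h3, h4⟩ := ((hfreq (|L| + 1)).and_eventually h2).exists
    linarith
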